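/- Let p ≥ 4 and p₀ be real numbers with 2 ≤ p₀ ≤ p, let λ > 1 and β̂, σ̂, γ̂ > 0, and let ρ be a measure on ℝ with m₂ := ∫_ℝ |z|² ρ(dz) < ∞ and m_{p₀} := ∫_ℝ |z|^{p₀} ρ(dz) < ∞, satisfying 2(p₀−1)λσ̂² + (p₀−1)(2^{p₀−4} + 1/2)·( (9/4)λγ̂²·m₂ + (3/2)^{p₀}·λ^{p₀−1}·γ̂^{p₀}·m_{p₀} ) ≤ 3β̂. Define β(s) = 2(s − ⌊s + 1/2⌋), μ(s,x) = β(s)x − β̂x³, σ(t,x) = σ̂·√t·(1−x²), γ(t,x,z) = γ̂·√t·x·(1+x²)^{1/p}·z, and set c(p₀) := 2^{p₀−4} if p₀ > 3 or p₀ = 2, and c(p₀) := 1/2 if 2 < p₀ ≤ 3. Then there exists a constant K > 0 such that for all s, t ∈ [0,1] and all x, y ∈ ℝ: p₀·|x−y|^{p₀−2}·(x−y)·(μ(s,x)−μ(s,y)) + (p₀(p₀−1)λ/2)·|x−y|^{p₀−2}·|σ(t,x)−σ(t,y)|² + p₀(p₀−1)·c(p₀)·∫_ℝ ( λ·|x−y|^{p₀−2}·|γ(t,x,z)−γ(t,y,z)|²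 + λ^{p₀−1}·|γ(t,x,z)−γ(t,y,z)|^{p₀} ) ρ(dz) ≤ K·|x−y|^{p₀}. -/

import Mathlib

set_option maxHeartbeats 1000000

open MeasureTheory

/-- The sawtooth function `β(s) = 2(s − ⌊s + 1/2⌋)`. -/
noncomputable def sawtooth (s : ℝ) : ℝ := 2 * (s - (⌊s + 1/2⌋ : ℤ))

/-- The double-well drift `μ(s,x) = β(s)x − β̂x³`. -/
noncomputable def μdw (β' s x : ℝ) : ℝ := sawtooth s * x - β' * x ^ 3

/-- The double-well diffusion coefficient `σ(t,x) = σ̂·√t·(1−x²)`. -/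
noncomputable def σdw (σ' t x : ℝ) : ℝ := σ' * Real.sqrt t * (1 - x ^ 2)

/-- The double-well jump coefficient `γ(t,x,z) = γ̂·√t·x·(1+x²)^{1/p}·z`. -/
noncomputable def γdw (γ' p t x z : ℝ) : ℝ :=
  γ' * Real.sqrt t * x * (1 + x ^ 2) ^ (1 / p) * z

/-- The constant `c(p₀)`: equal to `2^{p₀−4}` if `p₀ > 3` or `p₀ = 2`, and to
`1/2` if `2 < p₀ ≤ 3`. -/
noncomputable def cdw (p₀ : ℝ) : ℝ :=
  if 2 < p₀ ∧ p₀ ≤ 3 then 1 / 2 else (2:ℝ) ^ (p₀ - 4)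

section DWhelpers

lemma bernoulli_rpow {θ t : ℝ} (hθ0 : 0 ≤ θ) (hθ1 : θ ≤ 1) (ht : 0 ≤ t) :
    t ^ θ ≤ 1 + θ * (t - 1) := by
  have h := Real.geom_mean_le_arith_mean2_weighted hθ0 (by linarith : (0:ℝ) ≤ 1 - θ) ht
    zero_le_one (by ring)
  rw [Real.one_rpow, mul_one] at h
  linarith

lemma tangent_rpow {θ u w : ℝ} (hθ0 : 0 ≤ θ) (hθ1 : θ ≤ 1) (hu : 0 ≤ u) (hw : 0 < w) :
    u ^ θ ≤ w ^ θ + θ * w ^ (θ - 1) * (u - w) := by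
  have hb := bernoulli_rpow hθ0 hθ1 (div_nonneg hu hw.le)
  have h1 : u ^ θ = w ^ θ * (u / w) ^ θ := by
    rw [← Real.mul_rpow hw.le (div_nonneg hu hw.le), mul_div_cancel₀ _ hw.ne']
  have h2 : w ^ (θ - 1) = w ^ θ / w := by rw [Real.rpow_sub hw, Real.rpow_one]
  have hwθ : (0:ℝ) ≤ w ^ θ := Real.rpow_nonneg hw.le θ
  have h3 : w ^ θ * (u / w) ^ θ ≤ w ^ θ * (1 + θ * (u / w - 1)) :=
    mul_le_mul_of_nonneg_left hb hwθ
  have h4 : w ^ θ * (1 + θ * (u / w - 1)) = w ^ θ + θ * (w ^ θ / w) * (u - w) := by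
    field_simp
  rw [h1, h2]
  rw [h4] at h3
  exact h3

lemma fmono_aux {θ : ℝ} (hθ0 : 0 ≤ θ) {a b : ℝ} (hb : 0 ≤ b) (hba : b ≤ a) :
    b * (1 + b ^ 2) ^ θ ≤ a * (1 + a ^ 2) ^ θ := by
  have ha : 0 ≤ a := le_trans hb hba
  apply mul_le_mul hba _ (Real.rpow_nonneg (by positivity) θ) ha
  exact Real.rpow_le_rpow (by positivity) (by nlinarith) hθ0

lemma fmono {θ : ℝ} (hθ0 : 0 ≤ θ) {x y : ℝ} (hxy : y ≤ x) :
    y * (1 + y ^ 2) ^ θ ≤ x * (1 + x ^ 2) ^ θ := by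
  rcases le_total 0 y with hy | hy
  · exact fmono_aux hθ0 hy hxy
  · rcases le_total 0 x with hx | hx
    · have h1 : y * (1 + y ^ 2) ^ θ ≤ 0 :=
        mul_nonpos_iff.2 (Or.inr ⟨hy, Real.rpow_nonneg (by positivity) θ⟩)
      have h2 : 0 ≤ x * (1 + x ^ 2) ^ θ :=
        mul_nonneg hx (Real.rpow_nonneg (by positivity) θ)
      linarith
    · have h := fmono_aux hθ0 (by linarith : (0:ℝ) ≤ -x) (by linarith : -x ≤ -y)
      rw [neg_sq, neg_sq] at h
      linarith

lemma three_rpow_le {θ : ℝ} (hθ0 : 0 ≤ θ) (hθ : θ ≤ 1/4) : (3:ℝ) ^ θ ≤ 3/2 := by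
  have h1 : (3:ℝ) ^ θ ≤ 3 ^ (1/4 : ℝ) :=
    Real.rpow_le_rpow_of_exponent_le (by norm_num) hθ
  have h4 : ((3:ℝ) ^ (1/4 : ℝ)) ^ (4:ℕ) = 3 := by
    rw [← Real.rpow_natCast ((3:ℝ) ^ (1/4:ℝ)) 4, ← Real.rpow_mul (by norm_num : (0:ℝ) ≤ 3)]
    norm_num
  have h2 : (3:ℝ) ^ (1/4 : ℝ) ≤ 3/2 := by
    apply le_of_pow_le_pow_left₀ (n := 4) (by norm_num) (by norm_num : (0:ℝ) ≤ 3/2)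
    rw [h4]; norm_num
  linarith

lemma lemC_key {θ : ℝ} (hθ0 : 0 ≤ θ) (hθ : θ ≤ 1/4) {x y : ℝ} (hxy : |y| ≤ x) :
    x * (1 + x ^ 2) ^ θ - y * (1 + y ^ 2) ^ θ
      ≤ 3/2 * (x - y) * (1 + (x ^ 2 + x * y + y ^ 2)/3) ^ θ := by
  have hθ1 : θ ≤ 1 := le_trans hθ (by norm_num)
  have hQ : ∀ u : ℝ, 0 < 1 + (u ^ 2 + u * y + y ^ 2)/3 := by
    intro u; nlinarith [sq_nonneg (u + y), sq_nonneg u, sq_nonneg y]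
  set g : ℝ → ℝ := fun u => 3/2 * ((u - y) * (1 + (u ^ 2 + u * y + y ^ 2)/3) ^ θ)
      - u * (1 + u ^ 2) ^ θ with hg
  have hderiv : ∀ u : ℝ, HasDerivAt g
      (3/2 * (1 * (1 + (u ^ 2 + u * y + y ^ 2)/3) ^ θ
        + (u - y) * ((2 * u + y)/3 * θ * (1 + (u ^ 2 + u * y + y ^ 2)/3) ^ (θ - 1)))
      - (1 * (1 + u ^ 2) ^ θ + u * (2 * u * θ * (1 + u ^ 2) ^ (θ - 1)))) u := by
    intro u
    have h1 : HasDerivAt (fun v : ℝ => v ^ 2 + v * y + y ^ 2) (2 * u + y) u := by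
      have := ((hasDerivAt_pow 2 u).add ((hasDerivAt_id u).mul_const y)).add_const (y ^ 2)
      refine this.congr_deriv ?_
      push_cast; ring
    have hW : HasDerivAt (fun v : ℝ => 1 + (v ^ 2 + v * y + y ^ 2)/3) ((2 * u + y)/3) u :=
      (h1.div_const 3).const_add 1
    have hWθ := hW.rpow_const (p := θ) (Or.inl (hQ u).ne')
    have hlin : HasDerivAt (fun v : ℝ => v - y) 1 u := (hasDerivAt_id u).sub_const y
    have hprod := (hlin.mul hWθ).const_mul (3/2 : ℝ)
    have hu2 : HasDerivAt (fun v : ℝ => 1 + v ^ 2) (2 * u) u := by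
      have := (hasDerivAt_pow 2 u).const_add 1
      refine this.congr_deriv ?_
      push_cast; ring
    have huθ := hu2.rpow_const (p := θ) (Or.inl (by positivity : (1:ℝ) + u ^ 2 > 0).ne')
    have hf := (hasDerivAt_id u).mul huθ
    have := hprod.sub hf
    exact this
  have hG0 : ∀ u : ℝ, |y| ≤ u → 0 ≤
      3/2 * (1 * (1 + (u ^ 2 + u * y + y ^ 2)/3) ^ θ
        + (u - y) * ((2 * u + y)/3 * θ * (1 + (u ^ 2 + u * y + y ^ 2)/3) ^ (θ - 1)))
      - (1 * (1 + u ^ 2) ^ θ + u * (2 * u * θ * (1 + u ^ 2) ^ (θ - 1))) := by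
    intro u hu
    have hW0 : 0 < 1 + (u ^ 2 + u * y + y ^ 2)/3 := hQ u
    have hu0 : (0:ℝ) < 1 + u ^ 2 := by positivity
    have htan := tangent_rpow (θ := θ) (u := 1 + u ^ 2) (w := 1 + (u ^ 2 + u * y + y ^ 2)/3)
      hθ0 hθ1 hu0.le hW0
    have hs1 : u * (2 * u * θ * (1 + u ^ 2) ^ (θ - 1)) ≤ 1/2 * (1 + u ^ 2) ^ θ := by
      have hsub : (1 + u ^ 2) ^ (θ - 1) = (1 + u ^ 2) ^ θ / (1 + u ^ 2) := by
        rw [Real.rpow_sub hu0, Real.rpow_one]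
      rw [hsub]
      rw [show u * (2 * u * θ * ((1 + u ^ 2) ^ θ / (1 + u ^ 2)))
          = 2 * θ * u ^ 2 * (1 + u ^ 2) ^ θ / (1 + u ^ 2) from by ring]
      rw [div_le_iff₀ hu0]
      have hA : (0:ℝ) ≤ (1 + u ^ 2) ^ θ := Real.rpow_nonneg hu0.le θ
      nlinarith [sq_nonneg u, mul_nonneg hA (sq_nonneg u)]
    have hid : (1 + u ^ 2) - (1 + (u ^ 2 + u * y + y ^ 2)/3) = (u - y) * (2 * u + y)/3 := by
      ring
    nlinarith [htan, hs1, hid]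
  have hmono : MonotoneOn g (Set.Ici |y|) := by
    apply monotoneOn_of_deriv_nonneg (convex_Ici _)
    · exact fun u _ => (hderiv u).continuousAt.continuousWithinAt
    · intro u hu
      exact (hderiv u).differentiableAt.differentiableWithinAt
    · intro u hu
      rw [interior_Ici, Set.mem_Ioi] at hu
      rw [(hderiv u).deriv]
      exact hG0 u hu.le
  have hbase : -(y * (1 + y ^ 2) ^ θ) ≤ g |y| := by
    rcases le_or_gt 0 y with hy | hy
    · rw [abs_of_nonneg hy, hg]
      simp only [sub_self, zero_mul, mul_zero, zero_sub, le_refl]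
    · rw [abs_of_neg hy, hg]
      simp only
      have eb : 1 + ((-y) ^ 2 + (-y) * y + y ^ 2)/3 = 1 + y ^ 2/3 := by ring
      rw [eb, show (1:ℝ) + (-y) ^ 2 = 1 + y ^ 2 from by ring]
      have h3 : (1 + y ^ 2) ^ θ ≤ 3/2 * (1 + y ^ 2/3) ^ θ := by
        have ha : (1:ℝ) + y ^ 2 ≤ 3 * (1 + y ^ 2/3) := by linarith [sq_nonneg y]
        calc (1 + y ^ 2) ^ θ ≤ (3 * (1 + y ^ 2/3)) ^ θ :=
              Real.rpow_le_rpow (by positivity) ha hθ0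
          _ = 3 ^ θ * (1 + y ^ 2/3) ^ θ := Real.mul_rpow (by norm_num) (by positivity)
          _ ≤ 3/2 * (1 + y ^ 2/3) ^ θ :=
              mul_le_mul_of_nonneg_right (three_rpow_le hθ0 hθ) (Real.rpow_nonneg (by positivity) θ)
      nlinarith [mul_le_mul_of_nonneg_left h3 (by linarith : (0:ℝ) ≤ -2 * y)]
  have hgx : g |y| ≤ g x := hmono Set.self_mem_Ici hxy hxy
  have : -(y * (1 + y ^ 2) ^ θ) ≤ g x := le_trans hbase hgx
  rw [hg] at this
  simp only at this
  linarith

lemma lemC_half {θ : ℝ} (hθ0 : 0 ≤ θ) (hθ : θ ≤ 1/4) {x y : ℝ} (hyx : y ≤ x) :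
    |x * (1 + x ^ 2) ^ θ - y * (1 + y ^ 2) ^ θ|
      ≤ 3/2 * |x - y| * (1 + (x ^ 2 + x * y + y ^ 2)/3) ^ θ := by
  have habs : |x * (1 + x ^ 2) ^ θ - y * (1 + y ^ 2) ^ θ|
      = x * (1 + x ^ 2) ^ θ - y * (1 + y ^ 2) ^ θ :=
    abs_of_nonneg (sub_nonneg.2 (fmono hθ0 hyx))
  have habs2 : |x - y| = x - y := abs_of_nonneg (sub_nonneg.2 hyx)
  rw [habs, habs2]
  rcases le_total |y| x with h | h
  · exact lemC_key hθ0 hθ h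
  · rcases le_or_gt 0 y with hy | hy
    · have hxey : x = y := le_antisymm (by rwa [abs_of_nonneg hy] at h) hyx
      subst hxey
      simp only [sub_self, zero_mul, mul_zero]
      positivity
    · have hx : |(-x)| ≤ -y := by
        rw [abs_neg, abs_le]
        constructor
        · linarith
        · rw [abs_of_neg hy] at h; linarith
      have hkey := lemC_key hθ0 hθ hx
      rw [show (1:ℝ) + (-y) ^ 2 = 1 + y ^ 2 from by ring,
        show (1:ℝ) + (-x) ^ 2 = 1 + x ^ 2 from by ring,
        show (1:ℝ) + ((-y) ^ 2 + -y * -x + (-x) ^ 2)/3 = 1 + (x ^ 2 + x * y + y ^ 2)/3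
          from by ring] at hkey
      nlinarith [hkey]

lemma lemC {θ : ℝ} (hθ0 : 0 ≤ θ) (hθ : θ ≤ 1/4) (x y : ℝ) :
    |x * (1 + x ^ 2) ^ θ - y * (1 + y ^ 2) ^ θ|
      ≤ 3/2 * |x - y| * (1 + (x ^ 2 + x * y + y ^ 2)/3) ^ θ := by
  rcases le_total y x with h | h
  · exact lemC_half hθ0 hθ h
  · have := lemC_half hθ0 hθ h
    rw [abs_sub_comm, abs_sub_comm y x,
      show (1:ℝ) + (y ^ 2 + y * x + x ^ 2)/3 = 1 + (x ^ 2 + x * y + y ^ 2)/3 from by ring] at this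
    exact this

end DWhelpers

/-- Verification (Appendix A of the paper) that the coefficients of the
Lévy-driven double-well SDE satisfy the `p₀`-th order monotonicity condition of
Assumption 2.14 under the parameter constraint (eq:for_gamhat). -/
theorem stmt_17 (p p₀ Λ β' σ' γ' : ℝ) (hp : 4 ≤ p) (hp₀ : 2 ≤ p₀) (hp₀p : p₀ ≤ p)
    (hΛ : 1 < Λ) (hβ : 0 < β') (hσ : 0 < σ') (hγ : 0 < γ')
    (ρ : Measure ℝ)
    (h2 : Integrable (fun z : ℝ => |z| ^ 2) ρ)
    (hp₀i : Integrable (fun z : ℝ => |z| ^ p₀) ρ)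
    (hconstraint :
      2 * (p₀ - 1) * Λ * σ' ^ 2 +
        (p₀ - 1) * ((2:ℝ) ^ (p₀ - 4) + 1 / 2) *
          (9 / 4 * Λ * γ' ^ 2 * (∫ z, |z| ^ 2 ∂ρ) +
            ((3:ℝ) / 2) ^ p₀ * Λ ^ (p₀ - 1) * γ' ^ p₀ * (∫ z, |z| ^ p₀ ∂ρ)) ≤ 3 * β') :
    ∃ K > (0:ℝ), ∀ s ∈ Set.Icc (0:ℝ) 1, ∀ t ∈ Set.Icc (0:ℝ) 1, ∀ x y : ℝ,
      p₀ * |x - y| ^ (p₀ - 2) * (x - y) * (μdw β' s x - μdw β' s y)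
        + p₀ * (p₀ - 1) * Λ / 2 * |x - y| ^ (p₀ - 2) * |σdw σ' t x - σdw σ' t y| ^ 2
        + p₀ * (p₀ - 1) * cdw p₀ *
            ∫ z, (Λ * |x - y| ^ (p₀ - 2) * |γdw γ' p t x z - γdw γ' p t y z| ^ 2 +
                Λ ^ (p₀ - 1) * |γdw γ' p t x z - γdw γ' p t y z| ^ p₀) ∂ρ
        ≤ K * |x - y| ^ p₀ := by
  have hΛ0 : (0:ℝ) < Λ := by linarith
  have hp0 : (0:ℝ) < p := by linarith
  have hp₀0 : (0:ℝ) < p₀ := by linarith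
  obtain ⟨m2, hm2def⟩ : ∃ a : ℝ, a = ∫ z, |z| ^ 2 ∂ρ := ⟨_, rfl⟩
  obtain ⟨mp, hmpdef⟩ : ∃ a : ℝ, a = ∫ z, |z| ^ p₀ ∂ρ := ⟨_, rfl⟩
  rw [← hm2def, ← hmpdef] at hconstraint
  have hm2 : 0 ≤ m2 := hm2def ▸ integral_nonneg fun z => by positivity
  have hmp : 0 ≤ mp := hmpdef ▸ integral_nonneg fun z => Real.rpow_nonneg (abs_nonneg z) p₀
  obtain ⟨Sval, hSdef⟩ : ∃ a : ℝ, a = 9 / 4 * Λ * γ' ^ 2 * m2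
      + ((3:ℝ) / 2) ^ p₀ * Λ ^ (p₀ - 1) * γ' ^ p₀ * mp := ⟨_, rfl⟩
  rw [← hSdef] at hconstraint
  have hSval0 : 0 ≤ Sval := by
    rw [hSdef]
    apply add_nonneg
    · exact mul_nonneg (mul_nonneg (mul_nonneg (by norm_num) hΛ0.le) (sq_nonneg γ')) hm2
    · exact mul_nonneg (mul_nonneg (mul_nonneg (Real.rpow_nonneg (by norm_num) p₀)
        (Real.rpow_nonneg hΛ0.le _)) (Real.rpow_nonneg hγ.le p₀)) hmp
  have hc0 : 0 < cdw p₀ := by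
    unfold cdw
    split_ifs
    · norm_num
    · exact Real.rpow_pos_of_pos two_pos _
  have hcc' : cdw p₀ ≤ (2:ℝ) ^ (p₀ - 4) + 1/2 := by
    unfold cdw
    split_ifs
    · have : (0:ℝ) < (2:ℝ) ^ (p₀ - 4) := Real.rpow_pos_of_pos two_pos _
      linarith
    · linarith
  refine ⟨p₀ + p₀ * (p₀ - 1) * cdw p₀ * Sval + 1, by nlinarith [mul_nonneg (mul_nonneg
    (mul_nonneg hp₀0.le (by linarith : (0:ℝ) ≤ p₀ - 1)) hc0.le) hSval0], ?_⟩
  intro s hs t ht x y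
  rcases eq_or_ne x y with rfl | hxy
  · simp only [sub_self, abs_zero, mul_zero, zero_mul, Real.zero_rpow (by positivity : p₀ ≠ 0),
      ne_eq, OfNat.ofNat_ne_zero, not_false_eq_true, zero_pow, add_zero, zero_add, integral_zero]
    norm_num
  -- main case
  have hD : 0 < |x - y| := abs_pos.2 (sub_ne_zero_of_ne hxy)
  have hDp2 : 0 ≤ |x - y| ^ (p₀ - 2) := Real.rpow_nonneg (abs_nonneg _) _
  have hDp0 : 0 ≤ |x - y| ^ p₀ := Real.rpow_nonneg (abs_nonneg _) _
  obtain ⟨Q, hQdef⟩ : ∃ a : ℝ, a = x ^ 2 + x * y + y ^ 2 := ⟨_, rfl⟩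
  have hQ0 : 0 ≤ Q := by nlinarith [sq_nonneg (x + y), sq_nonneg x, sq_nonneg y]
  obtain ⟨W, hWdef⟩ : ∃ a : ℝ, a = 1 + Q / 3 := ⟨_, rfl⟩
  have hW1 : (1:ℝ) ≤ W := by rw [hWdef]; linarith
  have hW0 : (0:ℝ) < W := by linarith
  have hsplit : |x - y| ^ p₀ = |x - y| ^ (p₀ - 2) * (x - y) ^ 2 := by
    rw [show (x - y) ^ 2 = |x - y| ^ 2 from (sq_abs _).symm,
      show |x - y| ^ (2:ℕ) = |x - y| ^ ((2:ℕ):ℝ) from (Real.rpow_natCast _ 2).symm,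
      ← Real.rpow_add hD]
    norm_num
  have hθ0 : (0:ℝ) ≤ 1/p := by positivity
  have hθ : (1:ℝ)/p ≤ 1/4 := by
    rw [div_le_div_iff₀ hp0 (by norm_num)]
    linarith
  obtain ⟨Δ, hΔdef⟩ : ∃ a : ℝ, a = x * (1 + x ^ 2) ^ (1/p) - y * (1 + y ^ 2) ^ (1/p) := ⟨_, rfl⟩
  have hΔ : |Δ| ≤ 3/2 * |x - y| * W ^ (1/p) := by
    have h := lemC hθ0 hθ x y
    rw [← hΔdef, show (1:ℝ) + (x ^ 2 + x * y + y ^ 2)/3 = W from by rw [hWdef, hQdef]] at h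
    exact h
  have hWθ0 : 0 ≤ W ^ (1/p : ℝ) := Real.rpow_nonneg hW0.le _
  have hWsq : (W ^ (1/p : ℝ)) ^ (2:ℕ) ≤ W := by
    rw [← Real.rpow_natCast (W ^ (1/p : ℝ)) 2, ← Real.rpow_mul hW0.le]
    calc W ^ (1/p * (2:ℕ) : ℝ) ≤ W ^ (1:ℝ) := by
          apply Real.rpow_le_rpow_of_exponent_le hW1
          push_cast
          rw [div_mul_eq_mul_div, div_le_one hp0]
          linarith
      _ = W := Real.rpow_one W
  have hWp : (W ^ (1/p : ℝ)) ^ p₀ ≤ W := by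
    rw [← Real.rpow_mul hW0.le]
    calc W ^ (1/p * p₀ : ℝ) ≤ W ^ (1:ℝ) := by
          apply Real.rpow_le_rpow_of_exponent_le hW1
          rw [div_mul_eq_mul_div, one_mul, div_le_one hp0]
          linarith
      _ = W := Real.rpow_one W
  have ht0 : (0:ℝ) ≤ t := ht.1
  have ht1 : t ≤ 1 := ht.2
  -- drift estimate
  have hsaw : sawtooth s ≤ 1 := by
    unfold sawtooth
    have := Int.lt_floor_add_one (s + 1/2)
    linarith
  have hμ : (x - y) * (μdw β' s x - μdw β' s y) ≤ (x - y) ^ 2 - β' * ((x - y) ^ 2 * Q) := by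
    have key : ∀ a : ℝ, a ≤ 1 →
        (x - y) * ((a * x - β' * x ^ 3) - (a * y - β' * y ^ 3))
          ≤ (x - y) ^ 2 - β' * ((x - y) ^ 2 * Q) := by
      intro a ha
      have h := mul_nonneg (sub_nonneg.2 ha) (sq_nonneg (x - y))
      rw [hQdef]
      nlinarith [h]
    unfold μdw
    exact key _ hsaw
  have H1 : p₀ * |x - y| ^ (p₀ - 2) * (x - y) * (μdw β' s x - μdw β' s y)
      ≤ p₀ * |x - y| ^ p₀ - p₀ * β' * (|x - y| ^ p₀ * Q) := by
    calc p₀ * |x - y| ^ (p₀ - 2) * (x - y) * (μdw β' s x - μdw β' s y)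
        = (p₀ * |x - y| ^ (p₀ - 2)) * ((x - y) * (μdw β' s x - μdw β' s y)) := by ring
      _ ≤ (p₀ * |x - y| ^ (p₀ - 2)) * ((x - y) ^ 2 - β' * ((x - y) ^ 2 * Q)) :=
          mul_le_mul_of_nonneg_left hμ (mul_nonneg hp₀0.le hDp2)
      _ = p₀ * (|x - y| ^ (p₀ - 2) * (x - y) ^ 2)
          - p₀ * β' * ((|x - y| ^ (p₀ - 2) * (x - y) ^ 2) * Q) := by ring
      _ = p₀ * |x - y| ^ p₀ - p₀ * β' * (|x - y| ^ p₀ * Q) := by rw [← hsplit]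
  -- diffusion estimate
  have h43 : (x + y) ^ 2 ≤ 4/3 * Q := by
    rw [hQdef]; nlinarith [sq_nonneg (x - y)]
  have hσ2 : |σdw σ' t x - σdw σ' t y| ^ 2 ≤ σ' ^ 2 * ((x - y) ^ 2 * (4/3 * Q)) := by
    unfold σdw
    rw [sq_abs]
    have hst : Real.sqrt t ^ 2 = t := Real.sq_sqrt ht0
    calc (σ' * Real.sqrt t * (1 - x ^ 2) - σ' * Real.sqrt t * (1 - y ^ 2)) ^ 2
        = σ' ^ 2 * (((x + y) ^ 2 * (x - y) ^ 2) * Real.sqrt t ^ 2) := by ring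
      _ = σ' ^ 2 * (((x + y) ^ 2 * (x - y) ^ 2) * t) := by rw [hst]
      _ ≤ σ' ^ 2 * (((x + y) ^ 2 * (x - y) ^ 2) * 1) := by
          apply mul_le_mul_of_nonneg_left _ (sq_nonneg σ')
          exact mul_le_mul_of_nonneg_left ht1 (by positivity)
      _ ≤ σ' ^ 2 * ((x - y) ^ 2 * (4/3 * Q)) := by
          apply mul_le_mul_of_nonneg_left _ (sq_nonneg σ')
          rw [mul_one]
          calc (x + y) ^ 2 * (x - y) ^ 2 ≤ (4/3 * Q) * (x - y) ^ 2 :=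
                mul_le_mul_of_nonneg_right h43 (sq_nonneg _)
            _ = (x - y) ^ 2 * (4/3 * Q) := by ring
  have H2 : p₀ * (p₀ - 1) * Λ / 2 * |x - y| ^ (p₀ - 2) * |σdw σ' t x - σdw σ' t y| ^ 2
      ≤ 2/3 * p₀ * (p₀ - 1) * Λ * σ' ^ 2 * (|x - y| ^ p₀ * Q) := by
    calc p₀ * (p₀ - 1) * Λ / 2 * |x - y| ^ (p₀ - 2) * |σdw σ' t x - σdw σ' t y| ^ 2
        = (p₀ * (p₀ - 1) * Λ / 2 * |x - y| ^ (p₀ - 2)) * |σdw σ' t x - σdw σ' t y| ^ 2 := by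
          ring
      _ ≤ (p₀ * (p₀ - 1) * Λ / 2 * |x - y| ^ (p₀ - 2)) * (σ' ^ 2 * ((x - y) ^ 2 * (4/3 * Q))) := by
          apply mul_le_mul_of_nonneg_left hσ2
          have : (0:ℝ) ≤ p₀ * (p₀ - 1) * Λ / 2 := by
            apply div_nonneg _ (by norm_num)
            exact mul_nonneg (mul_nonneg hp₀0.le (by linarith)) hΛ0.le
          exact mul_nonneg this hDp2
      _ = 2/3 * p₀ * (p₀ - 1) * Λ * σ' ^ 2 * ((|x - y| ^ (p₀ - 2) * (x - y) ^ 2) * Q) := by ring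
      _ = 2/3 * p₀ * (p₀ - 1) * Λ * σ' ^ 2 * (|x - y| ^ p₀ * Q) := by rw [← hsplit]
  -- jump estimate
  obtain ⟨B, hBdef⟩ : ∃ a : ℝ, a = γ' * Real.sqrt t * |Δ| := ⟨_, rfl⟩
  have hB0 : 0 ≤ B := by
    rw [hBdef]
    exact mul_nonneg (mul_nonneg hγ.le (Real.sqrt_nonneg t)) (abs_nonneg Δ)
  obtain ⟨c1, hc1def⟩ : ∃ a : ℝ, a = Λ * |x - y| ^ (p₀ - 2) * B ^ 2 := ⟨_, rfl⟩
  obtain ⟨c2, hc2def⟩ : ∃ a : ℝ, a = Λ ^ (p₀ - 1) * B ^ p₀ := ⟨_, rfl⟩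
  have hpt : ∀ z : ℝ, Λ * |x - y| ^ (p₀ - 2) * |γdw γ' p t x z - γdw γ' p t y z| ^ 2 +
      Λ ^ (p₀ - 1) * |γdw γ' p t x z - γdw γ' p t y z| ^ p₀ = c1 * |z| ^ 2 + c2 * |z| ^ p₀ := by
    intro z
    have hγd : γdw γ' p t x z - γdw γ' p t y z = (γ' * Real.sqrt t * Δ) * z := by
      unfold γdw
      rw [hΔdef]; ring
    have habs : |γ' * Real.sqrt t * Δ| = B := by
      rw [hBdef, abs_mul, abs_mul, abs_of_pos hγ, abs_of_nonneg (Real.sqrt_nonneg t)]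
    rw [hγd, abs_mul, habs, mul_pow, Real.mul_rpow hB0 (abs_nonneg z), hc1def, hc2def]
    ring
  have hint : (∫ z, (Λ * |x - y| ^ (p₀ - 2) * |γdw γ' p t x z - γdw γ' p t y z| ^ 2 +
      Λ ^ (p₀ - 1) * |γdw γ' p t x z - γdw γ' p t y z| ^ p₀) ∂ρ) = c1 * m2 + c2 * mp := by
    rw [integral_congr_ae (Filter.Eventually.of_forall hpt)]
    rw [integral_add (h2.const_mul c1) (hp₀i.const_mul c2), integral_const_mul,
      integral_const_mul, ← hm2def, ← hmpdef]
  -- bounds on c1, c2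
  have hΔsq : |Δ| ^ 2 ≤ 9/4 * (|x - y| ^ (2:ℕ) * W) := by
    calc |Δ| ^ 2 ≤ (3/2 * |x - y| * W ^ (1/p : ℝ)) ^ 2 := by
          apply pow_le_pow_left₀ (abs_nonneg _) hΔ
      _ = 9/4 * (|x - y| ^ (2:ℕ) * (W ^ (1/p : ℝ)) ^ (2:ℕ)) := by ring
      _ ≤ 9/4 * (|x - y| ^ (2:ℕ) * W) := by
          apply mul_le_mul_of_nonneg_left _ (by norm_num)
          exact mul_le_mul_of_nonneg_left hWsq (by positivity)
  have hc1 : c1 ≤ 9/4 * Λ * γ' ^ 2 * (|x - y| ^ p₀ * W) := by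
    have hB2 : B ^ 2 ≤ γ' ^ 2 * (9/4 * (|x - y| ^ (2:ℕ) * W)) := by
      rw [hBdef, mul_pow, mul_pow, Real.sq_sqrt ht0]
      calc γ' ^ 2 * t * |Δ| ^ 2 ≤ γ' ^ 2 * 1 * |Δ| ^ 2 := by
            apply mul_le_mul_of_nonneg_right _ (sq_nonneg _)
            exact mul_le_mul_of_nonneg_left ht1 (sq_nonneg γ')
        _ = γ' ^ 2 * |Δ| ^ 2 := by ring
        _ ≤ γ' ^ 2 * (9/4 * (|x - y| ^ (2:ℕ) * W)) :=
            mul_le_mul_of_nonneg_left hΔsq (sq_nonneg γ')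
    calc c1 = (Λ * |x - y| ^ (p₀ - 2)) * B ^ 2 := hc1def
      _ ≤ (Λ * |x - y| ^ (p₀ - 2)) * (γ' ^ 2 * (9/4 * (|x - y| ^ (2:ℕ) * W))) :=
          mul_le_mul_of_nonneg_left hB2 (mul_nonneg hΛ0.le hDp2)
      _ = 9/4 * Λ * γ' ^ 2 * ((|x - y| ^ (p₀ - 2) * (x - y) ^ 2) * W) := by
          rw [← sq_abs (x - y)]; ring
      _ = 9/4 * Λ * γ' ^ 2 * (|x - y| ^ p₀ * W) := by rw [← hsplit]
  have hc2 : c2 ≤ (3/2 : ℝ) ^ p₀ * Λ ^ (p₀ - 1) * γ' ^ p₀ * (|x - y| ^ p₀ * W) := by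
    have hBle : B ≤ γ' * (3/2) * |x - y| * W ^ (1/p : ℝ) := by
      rw [hBdef]
      calc γ' * Real.sqrt t * |Δ| ≤ γ' * 1 * |Δ| := by
            apply mul_le_mul_of_nonneg_right _ (abs_nonneg Δ)
            exact mul_le_mul_of_nonneg_left (Real.sqrt_le_one.2 ht1) hγ.le
        _ = γ' * |Δ| := by ring
        _ ≤ γ' * (3/2 * |x - y| * W ^ (1/p : ℝ)) := mul_le_mul_of_nonneg_left hΔ hγ.le
        _ = γ' * (3/2) * |x - y| * W ^ (1/p : ℝ) := by ring
    have hBp : B ^ p₀ ≤ γ' ^ p₀ * (3/2 : ℝ) ^ p₀ * |x - y| ^ p₀ * (W ^ (1/p : ℝ)) ^ p₀ := by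
      calc B ^ p₀ ≤ (γ' * (3/2) * |x - y| * W ^ (1/p : ℝ)) ^ p₀ :=
            Real.rpow_le_rpow hB0 hBle hp₀0.le
        _ = γ' ^ p₀ * (3/2 : ℝ) ^ p₀ * |x - y| ^ p₀ * (W ^ (1/p : ℝ)) ^ p₀ := by
            rw [Real.mul_rpow (by positivity) hWθ0, Real.mul_rpow (by positivity) (abs_nonneg _),
              Real.mul_rpow hγ.le (by norm_num)]
    calc c2 ≤ Λ ^ (p₀ - 1) * (γ' ^ p₀ * (3/2 : ℝ) ^ p₀ * |x - y| ^ p₀ * (W ^ (1/p : ℝ)) ^ p₀) := by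
          rw [hc2def]
          exact mul_le_mul_of_nonneg_left hBp (Real.rpow_nonneg hΛ0.le _)
      _ ≤ Λ ^ (p₀ - 1) * (γ' ^ p₀ * (3/2 : ℝ) ^ p₀ * |x - y| ^ p₀ * W) := by
          apply mul_le_mul_of_nonneg_left _ (Real.rpow_nonneg hΛ0.le _)
          apply mul_le_mul_of_nonneg_left hWp
          exact mul_nonneg (mul_nonneg (Real.rpow_nonneg hγ.le _)
            (Real.rpow_nonneg (by norm_num) _)) hDp0
      _ = (3/2 : ℝ) ^ p₀ * Λ ^ (p₀ - 1) * γ' ^ p₀ * (|x - y| ^ p₀ * W) := by ring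
  have H3 : p₀ * (p₀ - 1) * cdw p₀ *
      (∫ z, (Λ * |x - y| ^ (p₀ - 2) * |γdw γ' p t x z - γdw γ' p t y z| ^ 2 +
        Λ ^ (p₀ - 1) * |γdw γ' p t x z - γdw γ' p t y z| ^ p₀) ∂ρ)
      ≤ p₀ * (p₀ - 1) * cdw p₀ * Sval * |x - y| ^ p₀
        + p₀ * (p₀ - 1) * cdw p₀ * Sval / 3 * (|x - y| ^ p₀ * Q) := by
    rw [hint]
    have hcoef : (0:ℝ) ≤ p₀ * (p₀ - 1) * cdw p₀ :=
      mul_nonneg (mul_nonneg hp₀0.le (by linarith)) hc0.le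
    have hsum : c1 * m2 + c2 * mp ≤ Sval * (|x - y| ^ p₀ * W) := by
      calc c1 * m2 + c2 * mp
          ≤ (9/4 * Λ * γ' ^ 2 * (|x - y| ^ p₀ * W)) * m2
            + ((3/2 : ℝ) ^ p₀ * Λ ^ (p₀ - 1) * γ' ^ p₀ * (|x - y| ^ p₀ * W)) * mp :=
            add_le_add (mul_le_mul_of_nonneg_right hc1 hm2)
              (mul_le_mul_of_nonneg_right hc2 hmp)
        _ = Sval * (|x - y| ^ p₀ * W) := by rw [hSdef]; ring
    calc p₀ * (p₀ - 1) * cdw p₀ * (c1 * m2 + c2 * mp)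
        ≤ p₀ * (p₀ - 1) * cdw p₀ * (Sval * (|x - y| ^ p₀ * W)) :=
          mul_le_mul_of_nonneg_left hsum hcoef
      _ = p₀ * (p₀ - 1) * cdw p₀ * Sval * |x - y| ^ p₀
          + p₀ * (p₀ - 1) * cdw p₀ * Sval / 3 * (|x - y| ^ p₀ * Q) := by
          rw [hWdef]; ring
  -- budget from the constraint
  have hbudget : 2/3 * p₀ * (p₀ - 1) * Λ * σ' ^ 2 + p₀ * (p₀ - 1) * cdw p₀ * Sval / 3
      ≤ p₀ * β' := by
    have h1 : (p₀ - 1) * cdw p₀ * Sval ≤ (p₀ - 1) * ((2:ℝ) ^ (p₀ - 4) + 1/2) * Sval :=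
      mul_le_mul_of_nonneg_right (mul_le_mul_of_nonneg_left hcc' (by linarith)) hSval0
    have h2' : 2 * (p₀ - 1) * Λ * σ' ^ 2 + (p₀ - 1) * cdw p₀ * Sval ≤ 3 * β' :=
      le_trans (add_le_add_right h1 _) hconstraint
    have h3 := mul_le_mul_of_nonneg_left h2' (show (0:ℝ) ≤ p₀/3 by linarith)
    linarith only [h3]
  have hDpQ : 0 ≤ |x - y| ^ p₀ * Q := mul_nonneg hDp0 hQ0
  have hprod := mul_le_mul_of_nonneg_right hbudget hDpQ
  linarith only [H1, H2, H3, hprod, hDp0]
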